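/- Let A ⊆ M be a MASA in a finite von Neumann algebra with trace τ, and suppose u ∈ M is a unitary normalizing A (u A u* = A) with u^m = 1 and E_A(u^k) = 0 for 1 ≤ k ≤ m−1. If p_1,...,p_n is a partition of unity by projections in A such that ‖p_i u^k p_i‖ ≤ c for some c < 1, all i = 1,...,n and all k = 1,...,m−1, then n ≥ m. -/

import Mathlib

/-- Let `A ⊆ M` be a MASA in a finite von Neumann algebra with trace `τ`, and let
`u ∈ M` be a unitary normalizing `A` with `uᵐ = 1` and `E_A(uᵏ) = 0` for `1 ≤ k ≤ m−1`.
If `p₁,...,pₙ` is a partition of unity by projections in `A` with `‖pᵢ uᵏ pᵢ‖ ≤ c < 1` for all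
`i` and all `1 ≤ k ≤ m−1`, then `n ≥ m`. -/
theorem stmt10 {M : Type*} [CStarAlgebra M]
    (τ : M →ₗ[ℂ] ℂ) (htrace : ∀ a b : M, τ (a * b) = τ (b * a)) (hτ1 : τ 1 = 1)
    (hτpos : ∀ x : M, 0 ≤ (τ (star x * x)).re ∧ (τ (star x * x)).im = 0)
    (hτfaithful : ∀ x : M, τ (star x * x) = 0 → x = 0)
    (A : StarSubalgebra ℂ M) (hAcomm : ∀ x ∈ A, ∀ y ∈ A, x * y = y * x)
    (hAmasa : ∀ x : M, (∀ a ∈ A, a * x = x * a) → x ∈ A)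
    (u : M) (hu_unitary : star u * u = 1 ∧ u * star u = 1)
    (hu_norm : ∀ a ∈ A, u * a * star u ∈ A)
    (m : ℕ) (hm : 1 ≤ m) (hum : u ^ m = 1)
    (E : M →ₗ[ℂ] M)
    (hErange : ∀ x, E x ∈ A) (hEfix : ∀ a ∈ A, E a = a)
    (hEbimod : ∀ a ∈ A, ∀ b ∈ A, ∀ x : M, E (a * x * b) = a * E x * b)
    (hEτ : ∀ x, τ (E x) = τ x)
    (hEu : ∀ k : ℕ, 1 ≤ k → k ≤ m - 1 → E (u ^ k) = 0)
    {n : ℕ} (p : Fin n → M)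
    (hp : ∀ i, p i ∈ A ∧ IsIdempotentElem (p i) ∧ IsSelfAdjoint (p i))
    (hsum : ∑ i, p i = 1)
    (c : ℝ) (hc : c < 1)
    (hpav : ∀ i, ∀ k : ℕ, 1 ≤ k → k ≤ m - 1 → ‖p i * u ^ k * p i‖ ≤ c) :
    m ≤ n := by
  have hu : u ∈ unitary M := Unitary.mem_iff.mpr hu_unitary
  have huk : ∀ k : ℕ, u ^ k ∈ unitary M := fun k => pow_mem hu k
  have hukl : ∀ k : ℕ, star (u ^ k) * u ^ k = 1 := fun k => (Unitary.mem_iff.mp (huk k)).1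
  have hukr : ∀ k : ℕ, u ^ k * star (u ^ k) = 1 := fun k => (Unitary.mem_iff.mp (huk k)).2
  -- conjugation by u^k preserves A
  have hsigmaA : ∀ (k : ℕ), ∀ a ∈ A, u ^ k * a * star (u ^ k) ∈ A := by
    intro k
    induction k with
    | zero => intro a ha; simpa using ha
    | succ k ih =>
      intro a ha
      have h : u ^ (k+1) * a * star (u ^ (k+1)) = u * (u ^ k * a * star (u ^ k)) * star u := by
        rw [pow_succ']
        simp [star_mul, mul_assoc]
      rw [h]
      exact hu_norm _ (ih a ha)
  -- the conjugates
  set q : Fin n → ℕ → M := fun i k => u ^ k * p i * star (u ^ k) with hq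
  -- q i k is a selfadjoint idempotent in A
  have hqA : ∀ i k, q i k ∈ A := fun i k => hsigmaA k _ (hp i).1
  have hqsa : ∀ i k, star (q i k) = q i k := by
    intro i k
    simp [hq, star_mul, mul_assoc, (hp i).2.2.star_eq]
  have hqidem : ∀ i k, q i k * q i k = q i k := by
    intro i k
    have : q i k * q i k
        = u ^ k * (p i * ((star (u ^ k) * u ^ k) * (p i * star (u ^ k)))) := by
      simp [hq, mul_assoc]
    rw [this, hukl, one_mul, ← mul_assoc (p i), (hp i).2.1.eq]
    simp [hq, mul_assoc]
  -- key orthogonality:  p i * q i k = 0 for 1 ≤ k ≤ m-1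
  have key : ∀ i, ∀ k : ℕ, 1 ≤ k → k ≤ m - 1 → p i * q i k = 0 := by
    intro i k hk1 hk2
    obtain ⟨hPA, hPidem, hPsa⟩ := hp i
    set P := p i with hP
    set S := q i k with hS
    have hcomm : P * S = S * P := hAcomm P hPA S (hqA i k)
    have hidem : (P * S) * (P * S) = P * S := by
      calc (P * S) * (P * S) = P * (S * P) * S := by simp [mul_assoc]
        _ = P * (P * S) * S := by rw [hcomm]
        _ = (P * P) * (S * S) := by simp [mul_assoc]
        _ = P * S := by rw [hPidem.eq, hqidem i k]
    have hsa : star (P * S) = P * S := by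
      rw [star_mul, hqsa i k, hPsa.star_eq, ← hcomm]
    -- relate to p u^k p
    have hPSu : (P * S) * u ^ k = P * u ^ k * P := by
      have : (P * S) * u ^ k = P * (u ^ k * (P * (star (u ^ k) * u ^ k)))  := by
        simp [hS, hq, mul_assoc, hP]
      rw [this, hukl]
      simp [mul_assoc]
    have hnorm : ‖P * S‖ ≤ c := by
      have := CStarRing.norm_mul_mem_unitary (P * S) (huk k)
      rw [hPSu] at this
      rw [← this]
      exact hpav i k hk1 hk2
    have hnn : ‖P * S‖ * ‖P * S‖ = ‖P * S‖ := by
      have h1 := CStarRing.norm_star_mul_self (x := P * S)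
      rw [hsa, hidem] at h1
      linarith
    have h0 : ‖P * S‖ = 0 := by
      nlinarith [norm_nonneg (P * S)]
    exact norm_eq_zero.mp h0
  -- pairwise orthogonality of the conjugates
  have orth : ∀ i, ∀ j k : ℕ, j < k → k ≤ m - 1 → q i j * q i k = 0 := by
    intro i j k hjk hkm
    set d := k - j with hd
    have hd1 : 1 ≤ d := by omega
    have hdm : d ≤ m - 1 := by omega
    have hk : k = j + d := by omega
    have hPd : p i * (u ^ d * p i * star (u ^ d)) = 0 := key i d hd1 hdm
    have expand : q i j * q i k
        = u ^ j * ((p i * (u ^ d * p i * star (u ^ d))) * (u ^ d * star (u ^ (j + d)))) := by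
      rw [hq]
      simp only [hk, pow_add, star_mul, mul_assoc]
      rw [← mul_assoc (star (u ^ j)) (u ^ j), hukl, one_mul,
        ← mul_assoc (star (u ^ d)) (u ^ d), hukl, one_mul]
    rw [expand, hPd, zero_mul, mul_zero]
  have orth' : ∀ i, ∀ j k : ℕ, j < m → k < m → j ≠ k → q i j * q i k = 0 := by
    intro i j k hj hk hjk
    rcases lt_or_gt_of_ne hjk with h | h
    · exact orth i j k h (by omega)
    · have := orth i k j h (by omega)
      have h2 : star (q i k * q i j) = star (0 : M) := by rw [this]
      rwa [star_mul, hqsa, hqsa, star_zero] at h2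
  -- the sum Q i is a selfadjoint idempotent
  set Q : Fin n → M := fun i => ∑ k ∈ Finset.range m, q i k with hQ
  have hQidem : ∀ i, Q i * Q i = Q i := by
    intro i
    calc Q i * Q i = ∑ j ∈ Finset.range m, ∑ k ∈ Finset.range m, q i j * q i k :=
          Finset.sum_mul_sum _ _ _ _
      _ = ∑ j ∈ Finset.range m, q i j := Finset.sum_congr rfl fun j hj => by
          rw [Finset.sum_eq_single j
            (fun k hk hkj => orth' i j k (Finset.mem_range.mp hj) (Finset.mem_range.mp hk)
              (Ne.symm hkj))
            (fun h => absurd hj h), hqidem i j]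
  have hQsa : ∀ i, star (Q i) = Q i := by
    intro i
    rw [hQ]
    rw [star_sum]
    exact Finset.sum_congr rfl fun k _ => hqsa i k
  -- trace of q i k equals trace of p i
  have htq : ∀ i k, τ (q i k) = τ (p i) := by
    intro i k
    have h := htrace (u ^ k * p i) (star (u ^ k))
    have h2 : star (u ^ k) * (u ^ k * p i) = p i := by
      rw [← mul_assoc, hukl, one_mul]
    rw [h2] at h
    simpa [hq, mul_assoc] using h
  have htQ : ∀ i, τ (Q i) = (m : ℂ) * τ (p i) := by
    intro i
    rw [hQ]
    simp only [map_sum]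
    rw [Finset.sum_congr rfl fun k _ => htq i k]
    simp
  -- positivity: Re τ (Q i) ≤ 1
  have hle : ∀ i, (m : ℝ) * (τ (p i)).re ≤ 1 := by
    intro i
    have hx := (hτpos (1 - Q i)).1
    have hss : star (1 - Q i) * (1 - Q i) = 1 - Q i := by
      rw [star_sub, star_one, hQsa i]
      rw [mul_sub, sub_mul, sub_mul, one_mul, mul_one, hQidem i, one_mul]
      abel
    rw [hss] at hx
    have : τ (1 - Q i) = 1 - (m : ℂ) * τ (p i) := by
      rw [map_sub, hτ1, htQ i]
    rw [this] at hx
    have hre : (1 - (m : ℂ) * τ (p i)).re = 1 - (m : ℝ) * (τ (p i)).re := by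
      simp [Complex.sub_re, Complex.mul_re]
    rw [hre] at hx
    linarith
  -- sum of traces is 1
  have hsum1 : ∑ i, (τ (p i)).re = 1 := by
    have : τ (∑ i, p i) = 1 := by rw [hsum, hτ1]
    rw [map_sum] at this
    have := congrArg Complex.re this
    simpa [Complex.re_sum] using this
  have final : (m : ℝ) ≤ n := by
    calc (m : ℝ) = m * ∑ i, (τ (p i)).re := by rw [hsum1, mul_one]
      _ = ∑ i, (m : ℝ) * (τ (p i)).re := by rw [Finset.mul_sum]
      _ ≤ ∑ _i : Fin n, (1 : ℝ) := Finset.sum_le_sum fun i _ => hle i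
      _ = n := by simp
  exact_mod_cast final
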